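/- Let (Ω,F,ℙ) be a finite probability space with ℙ(ω_j) = p_j > 0 for j = 1,…,M, let α₁,…,α_N > 0, γ > 0, and X = (X¹,…,Xᴺ) a random vector. Define ρ(X) := inf{c ∈ ℝ | ∃ Y ∈ L⁰(ℝᴺ) with Σᵢ Yⁱ = c a.s. and E[Σᵢ exp(−αᵢ(Xⁱ+Yⁱ))] ≤ γ}. Then ρ(X) = −β_N log(γ/(α₁ β_N d_N)), where β_N = Σᵢ 1/αᵢ and d_N = E[exp(−(1/β_N)(Σᵢ Xⁱ) − (1/β_N) Σᵢ (1/αᵢ) log(α₁/αᵢ))]. -/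

import Mathlib

open Finset Real

private lemma beta_pos {N : ℕ} [NeZero N] (α : Fin N → ℝ) (hα : ∀ i, 0 < α i) :
    0 < ∑ i, (α i)⁻¹ :=
  Finset.sum_pos (fun i _ => inv_pos.2 (hα i)) ⟨0, Finset.mem_univ 0⟩

private lemma key_le {N : ℕ} [NeZero N] (α : Fin N → ℝ) (hα : ∀ i, 0 < α i)
    (v : Fin N → ℝ) :
    α 0 * (∑ i, (α i)⁻¹) *
      Real.exp (-((∑ i, v i) + ∑ i, (α i)⁻¹ * Real.log (α 0 / α i)) / (∑ i, (α i)⁻¹))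
    ≤ ∑ i, Real.exp (-(α i) * v i) := by
  set β := ∑ i, (α i)⁻¹ with hβdef
  have hβ : 0 < β := beta_pos α hα
  have hgm := Real.geom_mean_le_arith_mean_weighted Finset.univ
      (fun i => (α i)⁻¹ / β) (fun i => α i * Real.exp (-(α i) * v i))
      (fun i _ => div_nonneg (inv_pos.2 (hα i)).le hβ.le)
      (by rw [← Finset.sum_div, ← hβdef, div_self hβ.ne'])
      (fun i _ => (mul_pos (hα i) (Real.exp_pos _)).le)
  have hsum : ∑ i, (α i)⁻¹ / β * (α i * Real.exp (-(α i) * v i))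
      = (∑ i, Real.exp (-(α i) * v i)) / β := by
    rw [Finset.sum_div]
    refine Finset.sum_congr rfl fun i _ => ?_
    have h1 := (hα i).ne'
    field_simp
  have hprod : ∏ i, (α i * Real.exp (-(α i) * v i)) ^ ((α i)⁻¹ / β)
      = Real.exp (∑ i, ((α i)⁻¹ / β) * (Real.log (α i) + -(α i) * v i)) := by
    rw [Real.exp_sum]
    refine Finset.prod_congr rfl fun i _ => ?_
    rw [Real.rpow_def_of_pos (mul_pos (hα i) (Real.exp_pos _)),
      Real.log_mul (ne_of_gt (hα i)) (Real.exp_ne_zero _), Real.log_exp]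
    ring_nf
  rw [hsum, hprod] at hgm
  have harg : Real.log (α 0) + -((∑ i, v i) + ∑ i, (α i)⁻¹ * Real.log (α 0 / α i)) / β
      = ∑ i, ((α i)⁻¹ / β) * (Real.log (α i) + -(α i) * v i) := by
    have h1 : ∀ i, (α i)⁻¹ * Real.log (α 0 / α i)
        = (α i)⁻¹ * Real.log (α 0) - (α i)⁻¹ * Real.log (α i) := by
      intro i
      rw [Real.log_div (ne_of_gt (hα 0)) (ne_of_gt (hα i))]; ring
    have h2 : ∀ i, ((α i)⁻¹ / β) * (Real.log (α i) + -(α i) * v i)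
        = ((α i)⁻¹ * Real.log (α i)) / β - v i / β := by
      intro i
      have hn := (hα i).ne'
      field_simp
      ring
    simp only [h1, h2, Finset.sum_sub_distrib, ← Finset.sum_div, ← Finset.sum_mul,
      ← Finset.mul_sum]
    rw [← hβdef]
    field_simp
    ring
  have hmain : α 0 * β *
      Real.exp (-((∑ i, v i) + ∑ i, (α i)⁻¹ * Real.log (α 0 / α i)) / β)
      = β * Real.exp (∑ i, ((α i)⁻¹ / β) * (Real.log (α i) + -(α i) * v i)) := by
    rw [← harg, Real.exp_add, Real.exp_log (hα 0)]
    ring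
  rw [hmain]
  calc β * Real.exp (∑ i, ((α i)⁻¹ / β) * (Real.log (α i) + -(α i) * v i))
      ≤ β * ((∑ i, Real.exp (-(α i) * v i)) / β) :=
        mul_le_mul_of_nonneg_left hgm hβ.le
    _ = ∑ i, Real.exp (-(α i) * v i) := by field_simp

private lemma key_eq {N : ℕ} [NeZero N] (α : Fin N → ℝ) (hα : ∀ i, 0 < α i)
    (x : Fin N → ℝ) (s : ℝ) :
    ∃ y : Fin N → ℝ, (∑ i, y i = s) ∧
      ∑ i, Real.exp (-(α i) * (x i + y i)) =
        α 0 * (∑ i, (α i)⁻¹) *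
          Real.exp (-((∑ i, x i) + s + ∑ i, (α i)⁻¹ * Real.log (α 0 / α i)) /
            (∑ i, (α i)⁻¹)) := by
  set β := ∑ i, (α i)⁻¹ with hβdef
  have hβ : 0 < β := beta_pos α hα
  set L := ∑ i, (α i)⁻¹ * Real.log (α 0 / α i) with hLdef
  set T := (∑ i, x i) + s with hTdef
  refine ⟨fun i => ((T + L) / β - Real.log (α 0 / α i)) / α i - x i, ?_, ?_⟩
  · have h1 : ∑ i, (((T + L) / β - Real.log (α 0 / α i)) / α i - x i)
        = ∑ i, ((α i)⁻¹ * ((T + L) / β) - (α i)⁻¹ * Real.log (α 0 / α i) - x i) := by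
      refine Finset.sum_congr rfl fun i _ => ?_
      have hn := (hα i).ne'
      field_simp
    rw [h1]
    simp only [Finset.sum_sub_distrib, ← Finset.sum_mul, ← hβdef, ← hLdef]
    have h2 : β * ((T + L) / β) = T + L := by field_simp
    rw [h2, hTdef]
    ring
  · have hterm : ∀ i : Fin N, Real.exp (-(α i) *
        (x i + (((T + L) / β - Real.log (α 0 / α i)) / α i - x i)))
        = α 0 * (α i)⁻¹ * Real.exp (-(T + L) / β) := by
      intro i
      have hαi := (hα i).ne'
      have harg : -(α i) * (x i + (((T + L) / β - Real.log (α 0 / α i)) / α i - x i))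
          = Real.log (α 0 / α i) + -(T + L) / β := by
        field_simp
        ring
      rw [harg, Real.exp_add, Real.exp_log (div_pos (hα 0) (hα i)), div_eq_mul_inv]
    simp only [hterm, ← Finset.sum_mul, ← Finset.mul_sum, ← hβdef]

/-- explicit value of the systemic risk measure with exponential
aggregation and fully flexible scenario-dependent allocations on a finite
probability space:
`ρ(X) = −β_N log(γ/(α₁ β_N d_N))` with `β_N = Σᵢ 1/αᵢ` and
`d_N = E[exp(−β_N⁻¹ Σᵢ Xⁱ − β_N⁻¹ Σᵢ αᵢ⁻¹ log(α₁/αᵢ))]`. -/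
theorem stmt19 {M N : ℕ} [NeZero N]
    (p : Fin M → ℝ) (hp : ∀ j, 0 < p j) (hps : ∑ j, p j = 1)
    (α : Fin N → ℝ) (hα : ∀ i, 0 < α i) (γ : ℝ) (hγ : 0 < γ)
    (X : Fin M → Fin N → ℝ) :
    sInf {c : ℝ | ∃ Y : Fin M → Fin N → ℝ, (∀ j, ∑ i, Y j i = c) ∧
        ∑ j, p j * ∑ i, Real.exp (-(α i) * (X j i + Y j i)) ≤ γ}
      = -(∑ i, (α i)⁻¹) * Real.log (γ / (α 0 * (∑ i, (α i)⁻¹) *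
          ∑ j, p j * Real.exp (-(∑ i, (α i)⁻¹)⁻¹ * (∑ i, X j i)
            - (∑ i, (α i)⁻¹)⁻¹ * ∑ i, (α i)⁻¹ * Real.log (α 0 / α i)))) := by
  set β := ∑ i, (α i)⁻¹ with hβdef
  have hβ : 0 < β := beta_pos α hα
  set L := ∑ i, (α i)⁻¹ * Real.log (α 0 / α i) with hLdef
  set d := ∑ j, p j * Real.exp (-β⁻¹ * (∑ i, X j i) - β⁻¹ * L) with hddef
  have hM : 0 < M := by
    rcases Nat.eq_zero_or_pos M with h | h
    · subst h; simp at hps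
    · exact h
  have hd : 0 < d :=
    Finset.sum_pos (fun j _ => mul_pos (hp j) (Real.exp_pos _)) ⟨⟨0, hM⟩, Finset.mem_univ _⟩
  have hA : 0 < α 0 * β * d := mul_pos (mul_pos (hα 0) hβ) hd
  have hiff : ∀ c : ℝ, α 0 * β * d * Real.exp (-c / β) ≤ γ ↔
      -β * Real.log (γ / (α 0 * β * d)) ≤ c := by
    intro c
    constructor
    · intro h
      have h1 : Real.exp (-c / β) ≤ γ / (α 0 * β * d) := by
        rw [le_div_iff₀ hA]; linarith [h]
      have h2 : -c / β ≤ Real.log (γ / (α 0 * β * d)) := by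
        have h3 := Real.log_le_log (Real.exp_pos _) h1
        rwa [Real.log_exp] at h3
      have h4 := mul_le_mul_of_nonneg_right h2 hβ.le
      rw [div_mul_cancel₀ _ hβ.ne'] at h4
      linarith
    · intro h
      have h2 : -c / β ≤ Real.log (γ / (α 0 * β * d)) := by
        rw [div_le_iff₀ hβ]
        nlinarith
      have h1 : Real.exp (-c / β) ≤ γ / (α 0 * β * d) :=
        le_trans (Real.exp_le_exp.2 h2) (le_of_eq (Real.exp_log (div_pos hγ hA)))
      have h3 := (le_div_iff₀ hA).1 h1
      linarith
  have hexp : ∀ j (c : ℝ), Real.exp (-((∑ i, X j i) + c + L) / β)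
      = Real.exp (-β⁻¹ * (∑ i, X j i) - β⁻¹ * L) * Real.exp (-c / β) := by
    intro j c
    rw [← Real.exp_add]
    congr 1
    field_simp
    ring
  have htotal : ∀ c : ℝ,
      ∑ j, p j * (α 0 * β * Real.exp (-((∑ i, X j i) + c + L) / β))
        = α 0 * β * d * Real.exp (-c / β) := by
    intro c
    have hrhs : (α 0 * β * ∑ j, p j * Real.exp (-β⁻¹ * (∑ i, X j i) - β⁻¹ * L)) *
        Real.exp (-c / β)
        = ∑ j, p j * (α 0 * β *
            (Real.exp (-β⁻¹ * (∑ i, X j i) - β⁻¹ * L) * Real.exp (-c / β))) := by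
      rw [Finset.mul_sum, Finset.sum_mul]
      exact Finset.sum_congr rfl fun j _ => by ring
    rw [hddef, hrhs]
    exact Finset.sum_congr rfl fun j _ => by rw [hexp j c]
  have hset : {c : ℝ | ∃ Y : Fin M → Fin N → ℝ, (∀ j, ∑ i, Y j i = c) ∧
        ∑ j, p j * ∑ i, Real.exp (-(α i) * (X j i + Y j i)) ≤ γ}
      = Set.Ici (-β * Real.log (γ / (α 0 * β * d))) := by
    ext c
    simp only [Set.mem_setOf_eq, Set.mem_Ici]
    constructor
    · rintro ⟨Y, hY, hYb⟩
      refine (hiff c).1 (le_trans ?_ hYb)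
      rw [← htotal c]
      refine Finset.sum_le_sum fun j _ => ?_
      refine mul_le_mul_of_nonneg_left ?_ (hp j).le
      have hle := key_le α hα (fun i => X j i + Y j i)
      rw [← hβdef, ← hLdef] at hle
      rwa [Finset.sum_add_distrib, hY j] at hle
    · intro hc
      choose y hy1 hy2 using fun j => key_eq α hα (X j) c
      refine ⟨y, hy1, ?_⟩
      have heq : ∑ j, p j * ∑ i, Real.exp (-(α i) * (X j i + y j i))
          = α 0 * β * d * Real.exp (-c / β) := by
        rw [← htotal c]
        refine Finset.sum_congr rfl fun j _ => ?_
        rw [hy2 j, ← hβdef, ← hLdef]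
      rw [heq]
      exact (hiff c).2 hc
  rw [hset, csInf_Ici]
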